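/- Two DynaMO obfuscation pairs compose: if a network's output is invariant under the coupled transformation with scalar a on layers (i, j) and invariant under the coupled transformation with scalar a' on layers (k, l), where the two propagation paths [i, j] and [k, l] are disjoint, then applying both transformations simultaneously also leaves the network's output unchanged for every input. -/

import Mathlib

/-- Evaluate the composition of the first `n` affine layers:
layer `k` maps `x` to `(W k)ᵀ x + b k`. -/
def evalNet (d : ℕ) (W : ℕ → Matrix (Fin d) (Fin d) ℝ) (b : ℕ → Fin d → ℝ) :
    ℕ → (Fin d → ℝ) → (Fin d → ℝ)
  | 0, x => x
  | (k+1), x => (W k).transpose.mulVec (evalNet d W b k x) + b k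

/-- Coupled transformation of the weights with scalar `a` on the path `(i, j)`:
`Wᵢ ↦ a·Wᵢ`, `W_j ↦ (1/a)·W_j`. -/
noncomputable def coupledW (d : ℕ) (a : ℝ) (i j : ℕ) (W : ℕ → Matrix (Fin d) (Fin d) ℝ) :
    ℕ → Matrix (Fin d) (Fin d) ℝ :=
  fun m => ((if m = i then a else 1) * (if m = j then a⁻¹ else 1)) • W m

/-- Coupled transformation of the biases with scalar `a` on the path `(i, j)`:
`b_m ↦ a·b_m` for `i ≤ m < j`. -/
def coupledB (d : ℕ) (a : ℝ) (i j : ℕ) (b : ℕ → Fin d → ℝ) : ℕ → Fin d → ℝ :=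
  fun m => (if i ≤ m ∧ m < j then a else (1:ℝ)) • b m

/-- Two DynaMO obfuscation pairs on disjoint propagation paths compose: if the
network output is invariant under the coupled transformation with scalar `a`
on path `(i, j)` and under the coupled transformation with scalar `a'` on path
`(k, l)`, and the paths `[i, j]` and `[k, l]` are disjoint, then applying both
transformations simultaneously also leaves the output unchanged. -/
lemma evalNet_congr (d n : ℕ) (W W' : ℕ → Matrix (Fin d) (Fin d) ℝ) (b b' : ℕ → Fin d → ℝ)
    (h : ∀ m, m < n → W m = W' m ∧ b m = b' m) (x : Fin d → ℝ) :
    evalNet d W b n x = evalNet d W' b' n x := by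
  induction n with
  | zero => rfl
  | succ n ih =>
    have hn := h n (Nat.lt_succ_self n)
    simp only [evalNet, ih (fun m hm => h m (hm.trans (Nat.lt_succ_self n))), hn.1, hn.2]

lemma eval_coupled_smul (d : ℕ) (a : ℝ) (ha : a ≠ 0) (i j : ℕ) (hij : i ≤ j)
    (W : ℕ → Matrix (Fin d) (Fin d) ℝ) (b : ℕ → Fin d → ℝ) :
    ∀ (m : ℕ) (x : Fin d → ℝ),
      evalNet d (coupledW d a i j W) (coupledB d a i j b) m x
        = (if i < m ∧ m ≤ j then a else 1) • evalNet d W b m x := by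
  intro m
  induction m with
  | zero => intro x; simp [evalNet]
  | succ m ih =>
    intro x
    simp only [evalNet, ih x, coupledW, coupledB]
    rw [Matrix.transpose_smul, Matrix.smul_mulVec, Matrix.mulVec_smul,
      smul_add, smul_smul]
    congr 2
    · split_ifs <;> first | rfl | omega | (field_simp)
    · split_ifs <;> first | rfl | omega

lemma eval_zero_const (d k l : ℕ) (W W' : ℕ → Matrix (Fin d) (Fin d) ℝ) (b b' : ℕ → Fin d → ℝ)
    (hW : ∀ m, k < m → W m = W' m) (hb : ∀ m, k ≤ m → b m = b' m) :
    ∀ n, k < n → ∀ x x' : Fin d → ℝ,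
      evalNet d (coupledW d 0 k l W) (coupledB d 0 k l b) n x
        = evalNet d (coupledW d 0 k l W') (coupledB d 0 k l b') n x' := by
  intro n
  induction n with
  | zero => omega
  | succ n ih =>
    intro hn x x'
    rcases Nat.lt_or_ge k n with h | h
    · simp only [evalNet]
      rw [ih h x x']
      congr 1
      · simp [coupledW, hW n h, Nat.ne_of_gt h]
      · simp [coupledB, hb n (le_of_lt h)]
    · have hk : k = n := by omega
      subst hk
      simp only [evalNet, coupledW, coupledB]
      simp [hb k le_rfl, Matrix.transpose_smul, Matrix.smul_mulVec]

lemma coupledW_comm (d : ℕ) (a a' : ℝ) (i j k l : ℕ) (W : ℕ → Matrix (Fin d) (Fin d) ℝ) :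
    coupledW d a' k l (coupledW d a i j W) = coupledW d a i j (coupledW d a' k l W) := by
  funext m
  simp only [coupledW, smul_smul]
  rw [mul_comm]

lemma coupledB_comm (d : ℕ) (a a' : ℝ) (i j k l : ℕ) (b : ℕ → Fin d → ℝ) :
    coupledB d a' k l (coupledB d a i j b) = coupledB d a i j (coupledB d a' k l b) := by
  funext m
  simp only [coupledB, smul_smul]
  rw [mul_comm]

theorem disjoint_obfuscation_pairs_compose (d n : ℕ)
    (W : ℕ → Matrix (Fin d) (Fin d) ℝ) (b : ℕ → Fin d → ℝ)
    (a a' : ℝ) (i j k l : ℕ) (hij : i ≤ j) (hkl : k ≤ l)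
    (hdisj : j < k ∨ l < i)
    (h1 : ∀ x, evalNet d (coupledW d a i j W) (coupledB d a i j b) n x = evalNet d W b n x)
    (h2 : ∀ x, evalNet d (coupledW d a' k l W) (coupledB d a' k l b) n x = evalNet d W b n x) :
    ∀ x, evalNet d (coupledW d a' k l (coupledW d a i j W))
        (coupledB d a' k l (coupledB d a i j b)) n x = evalNet d W b n x := by
  intro x
  by_cases ha' : a' = 0
  · subst ha'
    by_cases ha : a = 0
    · subst ha
      rcases hdisj with hjk | hli
      · rcases Nat.lt_or_ge k n with hk | hk
        · refine (eval_zero_const d k l _ _ _ _ ?_ ?_ n hk x x).trans (h2 x)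
          · intro m hm
            simp [coupledW, show m ≠ i by omega, show m ≠ j by omega]
          · intro m hm
            simp [coupledB, show ¬ (m < j) by omega]
        · refine (evalNet_congr d n _ _ _ _ ?_ x).trans (h1 x)
          intro m hm
          constructor
          · simp [coupledW, show m ≠ k by omega, show m ≠ l by omega]
          · simp [coupledB, show ¬ (k ≤ m) by omega]
      · rw [coupledW_comm, coupledB_comm]
        rcases Nat.lt_or_ge i n with hi | hi
        · refine (eval_zero_const d i j _ _ _ _ ?_ ?_ n hi x x).trans (h1 x)
          · intro m hm
            simp [coupledW, show m ≠ k by omega, show m ≠ l by omega]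
          · intro m hm
            simp [coupledB, show ¬ (m < l) by omega]
        · refine (evalNet_congr d n _ _ _ _ ?_ x).trans (h2 x)
          intro m hm
          constructor
          · simp [coupledW, show m ≠ i by omega, show m ≠ j by omega]
          · simp [coupledB, show ¬ (i ≤ m) by omega]
    · rw [coupledW_comm, coupledB_comm,
        eval_coupled_smul d a ha i j hij _ _ n x, h2 x]
      have k2 := eval_coupled_smul d a ha i j hij W b n x
      rw [h1 x] at k2
      exact k2.symm
  · rw [eval_coupled_smul d a' ha' k l hkl _ _ n x, h1 x]
    have k2 := eval_coupled_smul d a' ha' k l hkl W b n x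
    rw [h2 x] at k2
    exact k2.symm
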